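/- Let A = {(x₁,x₂,x₃) ∈ ℍ¹ : x₁² + x₂² = 1} be the right circular cylinder over the unit circle, and let ℋ³_H be the 3-dimensional Hausdorff measure built from the Korányi metric d_H. Then the restriction of ℋ³_H to A is uniformly distributed on (ℍ¹, d_H): ℋ³_H(B(x,r) ∩ A) = ℋ³_H(B(y,r) ∩ A) for all x, y ∈ A and all r > 0. -/

import Mathlib

open MeasureTheory Set ENNReal Real

noncomputable section

/-- The first Heisenberg group `ℍ¹`, identified with `ℝ³`. -/
abbrev H1 := ℝ × ℝ × ℝ

/-- The group law of `ℍ¹`: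
`x·y = (x₁+y₁, x₂+y₂, x₃+y₃ - 2(x₁y₂ - x₂y₁))`. -/
def hmul1 (x y : H1) : H1 :=
  (x.1 + y.1, x.2.1 + y.2.1, x.2.2 + y.2.2 - 2 * (x.1 * y.2.1 - x.2.1 * y.1))

/-- The group inverse of `ℍ¹`, `x⁻¹ = -x`. -/
def hinv1 (x : H1) : H1 := (-x.1, -x.2.1, -x.2.2)

/-- The Korányi norm `‖x‖_H = ((x₁²+x₂²)² + x₃²)^{1/4}`. -/
def KNorm1 (x : H1) : ℝ := ((x.1 ^ 2 + x.2.1 ^ 2) ^ 2 + x.2.2 ^ 2) ^ ((1 : ℝ) / 4)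

/-- The Korányi metric `d_H(x,y) = ‖x⁻¹·y‖_H` on `ℍ¹`. -/
def dH1 (x y : H1) : ℝ := KNorm1 (hmul1 (hinv1 x) y)

/-- The closed `d_H`-ball of center `x` and radius `r`. -/
def ball1 (x : H1) (r : ℝ) : Set H1 := {y | dH1 x y ≤ r}

/-- `d_H`-diameter of a set, as an extended real. -/
def ediam1 (E : Set H1) : ℝ≥0∞ := ⨆ x ∈ E, ⨆ y ∈ E, ENNReal.ofReal (dH1 x y)

/-- The `s`-dimensional Hausdorff measure built from the Korányi metric `d_H` on `ℍ¹`. -/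
def haus1 (s : ℝ) (E : Set H1) : ℝ≥0∞ :=
  ⨆ (δ : ℝ) (_ : 0 < δ), ⨅ (t : ℕ → Set H1) (_ : E ⊆ ⋃ i, t i)
    (_ : ∀ i, ediam1 (t i) ≤ ENNReal.ofReal δ), ∑' i, ediam1 (t i) ^ s

/-- rotation by (c,s) about the x₃-axis followed by vertical translation by t -/
def phi1 (c s t : ℝ) (a : H1) : H1 :=
  (c * a.1 - s * a.2.1, s * a.1 + c * a.2.1, a.2.2 + t)

lemma phi1_inv (c s t : ℝ) (h : c ^ 2 + s ^ 2 = 1) (a : H1) :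
    phi1 c (-s) (-t) (phi1 c s t a) = a := by
  obtain ⟨a1, a2, a3⟩ := a
  simp only [phi1, Prod.mk.injEq]
  refine ⟨by linear_combination a1 * h, by linear_combination a2 * h, by ring⟩

lemma phi1_isom (c s t : ℝ) (h : c ^ 2 + s ^ 2 = 1) (a b : H1) :
    dH1 (phi1 c s t a) (phi1 c s t b) = dH1 a b := by
  obtain ⟨a1, a2, a3⟩ := a
  obtain ⟨b1, b2, b3⟩ := b
  simp only [dH1, phi1, hmul1, hinv1, KNorm1]
  congr 1
  linear_combination ((c^2+s^2+1) * ((b1-a1)^2+(b2-a2)^2)^2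
    + 4*(a1*b2-a2*b1)*(b3-a3) + 4*(c^2+s^2+1)*(a1*b2-a2*b1)^2) * h

lemma phi1_cyl (c s t : ℝ) (h : c ^ 2 + s ^ 2 = 1) (a : H1) :
    (phi1 c s t a).1 ^ 2 + (phi1 c s t a).2.1 ^ 2 = a.1 ^ 2 + a.2.1 ^ 2 := by
  simp only [phi1]
  linear_combination (a.1 ^ 2 + a.2.1 ^ 2) * h

lemma ediam1_image_le (f : H1 → H1) (hf : ∀ a b, dH1 (f a) (f b) = dH1 a b)
    (S : Set H1) : ediam1 (f '' S) ≤ ediam1 S := by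
  refine iSup₂_le fun x hx => iSup₂_le fun y hy => ?_
  obtain ⟨a, ha, rfl⟩ := hx
  obtain ⟨b, hb, rfl⟩ := hy
  rw [hf]
  calc ENNReal.ofReal (dH1 a b)
      ≤ ⨆ y ∈ S, ENNReal.ofReal (dH1 a y) := le_iSup₂ (f := fun y _ => ENNReal.ofReal (dH1 a y)) b hb
    _ ≤ ediam1 S := le_iSup₂ (f := fun x _ => ⨆ y ∈ S, ENNReal.ofReal (dH1 x y)) a ha

lemma haus1_image_le (f : H1 → H1) (hf : ∀ a b, dH1 (f a) (f b) = dH1 a b)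
    (s : ℝ) (hs : 0 ≤ s) (E : Set H1) : haus1 s (f '' E) ≤ haus1 s E := by
  refine iSup_mono fun δ => iSup_mono fun hδ => ?_
  refine le_iInf fun t => le_iInf fun ht => le_iInf fun hd => ?_
  calc (⨅ (u : ℕ → Set H1) (_ : f '' E ⊆ ⋃ i, u i)
          (_ : ∀ i, ediam1 (u i) ≤ ENNReal.ofReal δ), ∑' i, ediam1 (u i) ^ s)
      ≤ ∑' i, ediam1 (f '' t i) ^ s := by
        refine iInf_le_of_le (fun i => f '' t i) (iInf_le_of_le ?_ (iInf_le_of_le ?_ le_rfl))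
        · rw [← Set.image_iUnion]; exact Set.image_mono ht
        · exact fun i => (ediam1_image_le f hf _).trans (hd i)
    _ ≤ ∑' i, ediam1 (t i) ^ s :=
        Summable.tsum_le_tsum (fun i => ENNReal.rpow_le_rpow (ediam1_image_le f hf _) hs)
          ENNReal.summable ENNReal.summable

lemma haus1_image_eq (f g : H1 → H1) (hf : ∀ a b, dH1 (f a) (f b) = dH1 a b)
    (hgf : ∀ a, g (f a) = a) (hfg : ∀ a, f (g a) = a)
    (s : ℝ) (hs : 0 ≤ s) (E : Set H1) : haus1 s (f '' E) = haus1 s E := by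
  have hg : ∀ a b, dH1 (g a) (g b) = dH1 a b := fun a b => by
    conv_rhs => rw [← hfg a, ← hfg b]
    exact (hf (g a) (g b)).symm ▸ rfl
  refine le_antisymm (haus1_image_le f hf s hs E) ?_
  have h2 := haus1_image_le g hg s hs (f '' E)
  have himg : g '' (f '' E) = E := by
    rw [Set.image_image]; simp [hgf]
  rwa [himg] at h2

/-- The restriction of the 3-dimensional Korányi Hausdorff measure to the right circular
cylinder `{x₁² + x₂² = 1} ⊆ ℍ¹` is uniformly distributed on `(ℍ¹, d_H)`. -/
theorem statement19 :
    ∀ x ∈ {p : H1 | p.1 ^ 2 + p.2.1 ^ 2 = 1},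
      ∀ y ∈ {p : H1 | p.1 ^ 2 + p.2.1 ^ 2 = 1},
        ∀ r : ℝ, 0 < r →
          haus1 3 (ball1 x r ∩ {p : H1 | p.1 ^ 2 + p.2.1 ^ 2 = 1}) =
          haus1 3 (ball1 y r ∩ {p : H1 | p.1 ^ 2 + p.2.1 ^ 2 = 1}) := by
  intro x hx y hy r hr
  simp only [Set.mem_setOf_eq] at hx hy
  set c : ℝ := x.1 * y.1 + x.2.1 * y.2.1 with hc
  set s : ℝ := x.1 * y.2.1 - x.2.1 * y.1 with hsdef
  set t : ℝ := y.2.2 - x.2.2 with ht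
  have h : c ^ 2 + s ^ 2 = 1 := by
    rw [hc, hsdef]; linear_combination (y.1 ^ 2 + y.2.1 ^ 2) * hx + hy
  have hxy : phi1 c s t x = y := by
    obtain ⟨x1, x2, x3⟩ := x
    obtain ⟨y1, y2, y3⟩ := y
    simp only [phi1, hc, hsdef, ht, Prod.mk.injEq]
    simp only [Set.mem_setOf_eq] at hx
    refine ⟨by linear_combination y1 * hx, by linear_combination y2 * hx, by ring⟩
  have key : phi1 c s t '' (ball1 x r ∩ {p : H1 | p.1 ^ 2 + p.2.1 ^ 2 = 1}) =
      ball1 y r ∩ {p : H1 | p.1 ^ 2 + p.2.1 ^ 2 = 1} := by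
    ext z
    constructor
    · rintro ⟨w, ⟨hw1, hw2⟩, rfl⟩
      refine ⟨?_, ?_⟩
      · show dH1 y (phi1 c s t w) ≤ r
        rw [← hxy, phi1_isom c s t h]; exact hw1
      · show _ = 1
        rw [phi1_cyl c s t h]; exact hw2
    · rintro ⟨hz1, hz2⟩
      refine ⟨phi1 c (-s) (-t) z, ⟨?_, ?_⟩, ?_⟩
      · show dH1 x (phi1 c (-s) (-t) z) ≤ r
        have h' : c ^ 2 + (-s) ^ 2 = 1 := by rw [neg_sq]; exact h
        calc dH1 x (phi1 c (-s) (-t) z)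
            = dH1 (phi1 c (-s) (-t) (phi1 c s t x)) (phi1 c (-s) (-t) z) := by
              rw [phi1_inv c s t h x]
          _ = dH1 (phi1 c s t x) z := phi1_isom c (-s) (-t) h' _ _
          _ = dH1 y z := by rw [hxy]
          _ ≤ r := hz1
      · show _ = 1
        have h' : c ^ 2 + (-s) ^ 2 = 1 := by rw [neg_sq]; exact h
        rw [phi1_cyl c (-s) (-t) h']; exact hz2
      · -- phi1 c s t (phi1 c (-s) (-t) z) = z
        have := phi1_inv c (-s) (-t) (by rw [neg_sq]; exact h) z
        simpa using this
  calc haus1 3 (ball1 x r ∩ {p : H1 | p.1 ^ 2 + p.2.1 ^ 2 = 1})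
      = haus1 3 (phi1 c s t '' (ball1 x r ∩ {p : H1 | p.1 ^ 2 + p.2.1 ^ 2 = 1})) :=
        (haus1_image_eq (phi1 c s t) (phi1 c (-s) (-t)) (phi1_isom c s t h)
          (phi1_inv c s t h)
          (fun a => by simpa using phi1_inv c (-s) (-t) (by rw [neg_sq]; exact h) a)
          3 (by norm_num) _).symm
    _ = haus1 3 (ball1 y r ∩ {p : H1 | p.1 ^ 2 + p.2.1 ^ 2 = 1}) := by rw [key]
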